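/- Let r : ℤ → ℝ² be a discrete planar curve with edge tangent vectors t_k = r_{k+1} − r_k, and let k ∈ ℤ be such that det[t_{k−1}, t_k] ≠ 0, where det[u,v] denotes the determinant of the 2×2 matrix with columns u and v. Define the first and second affine curvatures κ_k = det[t_k, t_{k+1}] / det[t_{k−1}, t_k] and κ̄_k = det[t_{k−1}, t_{k+1}] / det[t_{k−1}, t_k]. Then the chain structure holds: r_{k+2} = κ_k · r_{k−1} + (−κ_k − κ̄_k) · r_k + (1 + κ̄_k) · r_{k+1}. -/

import Mathlib

/-- Determinant of the 2×2 matrix with columns `u` and `v`. -/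
noncomputable def det2 (u v : Fin 2 → ℝ) : ℝ := (Matrix.transpose (Matrix.of ![u, v])).det

lemma det2_eq (u v : Fin 2 → ℝ) : det2 u v = u 0 * v 1 - v 0 * u 1 := by
  simp [det2, Matrix.det_fin_two, Matrix.vecHead, Matrix.transpose_apply]
  ring

/-- Chain structure for a discrete planar curve:
`r (k+2) = κ • r (k-1) + (-κ - κ̄) • r k + (1 + κ̄) • r (k+1)`. -/
theorem koch_chain_structure (r : ℤ → Fin 2 → ℝ) (t : ℤ → Fin 2 → ℝ)
    (ht : ∀ j, t j = r (j + 1) - r j) (k : ℤ)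
    (hnd : det2 (t (k - 1)) (t k) ≠ 0)
    (κ κbar : ℝ)
    (hκ : κ = det2 (t k) (t (k + 1)) / det2 (t (k - 1)) (t k))
    (hκbar : κbar = det2 (t (k - 1)) (t (k + 1)) / det2 (t (k - 1)) (t k)) :
    r (k + 2) = κ • r (k - 1) + (-κ - κbar) • r k + (1 + κbar) • r (k + 1) := by
  have h1 : t (k - 1) = r k - r (k - 1) := by
    have e : k - 1 + 1 = k := by ring
    rw [ht, e]
  have h2 : t k = r (k + 1) - r k := ht k
  have h3 : t (k + 1) = r (k + 2) - r (k + 1) := by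
    have e : k + 1 + 1 = k + 2 := by ring
    rw [ht, e]
  simp only [det2_eq, h1, h2, h3] at hnd hκ hκbar
  subst hκ hκbar
  funext i
  simp only [Pi.add_apply, Pi.smul_apply, Pi.sub_apply, smul_eq_mul] at *
  fin_cases i <;>
  · simp only [Fin.zero_eta, Fin.mk_one, Fin.isValue]
    generalize hD : (r k 0 - r (k - 1) 0) * (r (k + 1) 1 - r k 1) - (r (k + 1) 0 - r k 0) * (r k 1 - r (k - 1) 1) = D at *
    field_simp
    rw [← hD]
    ring
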